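/- Let V be a finite-dimensional complex vector space and let W = V × V* carry the canonical symplectic form ω((v,φ),(w,ψ)) = ψ(v) − φ(w). Let f : W → W be a differentiable map such that: (i) for every z ∈ W the derivative Df_z preserves ω, i.e. ω(Df_z(u), Df_z(u')) = ω(u,u') for all u,u'; (ii) f is equivariant for fiber scaling, i.e. f(v, λφ) = σ_λ(f(v,φ)) for all λ ∈ ℂˣ and (v,φ) ∈ W, where σ_λ(w,ψ) = (w, λψ); (iii) f is the identity on the zero section, i.e. f(v,0) = (v,0) for all v ∈ V. Then f is the identity map of W. -/

import Mathlib

/-- Rigidity: a differentiable self-map of `W = V × V*` whose derivative everywhere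
preserves the canonical symplectic form, which is equivariant for the fiber-scaling
`ℂ*`-action `σ_λ(w,ψ) = (w, λψ)`, and which is the identity on the zero section, is
the identity map. -/
theorem symplectic_equivariant_rigidity
    (V : Type*) [NormedAddCommGroup V] [NormedSpace ℂ V] [FiniteDimensional ℂ V]
    (ω : (V × (V →L[ℂ] ℂ)) → (V × (V →L[ℂ] ℂ)) → ℂ)
    (hω : ∀ p q : V × (V →L[ℂ] ℂ), ω p q = q.2 p.1 - p.2 q.1)
    (f : V × (V →L[ℂ] ℂ) → V × (V →L[ℂ] ℂ))
    (hdiff : Differentiable ℂ f)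
    (hsymp : ∀ (z u u' : V × (V →L[ℂ] ℂ)),
      ω (fderiv ℂ f z u) (fderiv ℂ f z u') = ω u u')
    (hequiv : ∀ (l : ℂˣ) (v : V) (φ : V →L[ℂ] ℂ),
      f (v, (l : ℂ) • φ) = ((f (v, φ)).1, (l : ℂ) • (f (v, φ)).2))
    (hzero : ∀ v : V, f (v, 0) = (v, 0)) :
    f = id := by
  -- Step 1: first component of f is the identity
  have hfst : ∀ z : V × (V →L[ℂ] ℂ), (f z).1 = z.1 := by
    rintro ⟨v, φ⟩
    have hc : Continuous fun c : ℂ => f (v, c • φ) :=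
      hdiff.continuous.comp (continuous_const.prodMk (continuous_id.smul continuous_const))
    have t1 : Filter.Tendsto (fun c : ℂ => f (v, c • φ)) (nhdsWithin 0 {0}ᶜ)
        (nhds ((v : V), (0 : V →L[ℂ] ℂ))) := by
      have h0 : Filter.Tendsto (fun c : ℂ => f (v, c • φ)) (nhdsWithin 0 {0}ᶜ)
          (nhds (f (v, (0 : ℂ) • φ))) := (hc.tendsto 0).mono_left nhdsWithin_le_nhds
      rw [zero_smul ℂ φ, hzero v] at h0
      exact h0
    have t2 : Filter.Tendsto (fun c : ℂ => f (v, c • φ)) (nhdsWithin 0 {0}ᶜ)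
        (nhds ((f (v, φ)).1, (0 : V →L[ℂ] ℂ))) := by
      have hcont : Continuous fun c : ℂ => ((f (v, φ)).1, c • (f (v, φ)).2) :=
        continuous_const.prodMk (continuous_id.smul continuous_const)
      have t3 : Filter.Tendsto (fun c : ℂ => ((f (v, φ)).1, c • (f (v, φ)).2))
          (nhdsWithin 0 {0}ᶜ) (nhds ((f (v, φ)).1, (0 : V →L[ℂ] ℂ))) := by
        have h0 : Filter.Tendsto (fun c : ℂ => ((f (v, φ)).1, c • (f (v, φ)).2))
            (nhdsWithin 0 {0}ᶜ) (nhds ((f (v, φ)).1, (0 : ℂ) • (f (v, φ)).2)) :=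
          (hcont.tendsto 0).mono_left nhdsWithin_le_nhds
        rw [zero_smul ℂ ((f (v, φ)).2)] at h0
        exact h0
      refine t3.congr' ?_
      filter_upwards [self_mem_nhdsWithin] with c hc0
      exact (hequiv (Units.mk0 c hc0) v φ).symm
    have := tendsto_nhds_unique t1 t2
    exact (Prod.mk.injEq _ _ _ _ ▸ this).1.symm
  -- Step 2: full equivariance including scalar 0
  have heqall : ∀ (c : ℂ) (v : V) (φ : V →L[ℂ] ℂ),
      f (v, c • φ) = ((v : V), c • (f (v, φ)).2) := by
    intro c v φ
    rcases eq_or_ne c 0 with rfl | hc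
    · rw [zero_smul ℂ φ, zero_smul ℂ ((f (v, φ)).2)]
      exact hzero v
    · have h := hequiv (Units.mk0 c hc) v φ
      simp only [Units.val_mk0] at h
      rw [h, hfst (v, φ)]
  -- Step 3: first component of the derivative is the identity
  have hDfst : ∀ (z u : V × (V →L[ℂ] ℂ)), (fderiv ℂ f z u).1 = u.1 := by
    intro z u
    have h1 : (Prod.fst ∘ f : V × (V →L[ℂ] ℂ) → V) = Prod.fst := funext fun z => hfst z
    have h2 : HasFDerivAt (Prod.fst ∘ f)
        ((ContinuousLinearMap.fst ℂ V (V →L[ℂ] ℂ)).comp (fderiv ℂ f z)) z :=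
      (ContinuousLinearMap.fst ℂ V (V →L[ℂ] ℂ)).hasFDerivAt.comp z (hdiff z).hasFDerivAt
    rw [h1] at h2
    have h3 := h2.unique (hasFDerivAt_fst)
    calc (fderiv ℂ f z u).1
        = ((ContinuousLinearMap.fst ℂ V (V →L[ℂ] ℂ)).comp (fderiv ℂ f z)) u := rfl
      _ = (ContinuousLinearMap.fst ℂ V (V →L[ℂ] ℂ)) u := by rw [h3]
      _ = u.1 := rfl
  -- Step 4: second component of the derivative in fiber directions is the identity
  have hDsnd : ∀ (v : V) (ψ : V →L[ℂ] ℂ),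
      (fderiv ℂ f (v, 0) ((0 : V), ψ)).2 = ψ := by
    intro v ψ
    ext u₁
    have h := hsymp (v, 0) (u₁, 0) (0, ψ)
    rw [hω, hω] at h
    have e1 := hDfst (v, 0) (u₁, (0 : V →L[ℂ] ℂ))
    have e2 := hDfst (v, 0) ((0 : V), ψ)
    simp only [e1, e2] at h
    simpa using h
  -- Step 5: conclude
  funext z
  obtain ⟨v, φ⟩ := z
  -- derivative of the curve c ↦ f (v, c • φ) at 0, computed two ways
  have hinner : HasDerivAt (fun c : ℂ => ((v, c • φ) : V × (V →L[ℂ] ℂ))) ((0 : V), φ) 0 := by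
    refine (hasDerivAt_const (0 : ℂ) v).prodMk ?_
    have h := (hasDerivAt_id (0 : ℂ)).smul_const φ
    rw [one_smul ℂ φ] at h
    exact h
  have hd1 : HasDerivAt (fun c : ℂ => f (v, c • φ)) (fderiv ℂ f (v, 0) ((0 : V), φ)) 0 := by
    have h0 : ((v : V), (0 : ℂ) • φ) = ((v : V), (0 : V →L[ℂ] ℂ)) :=
      congrArg (Prod.mk v) (zero_smul ℂ φ)
    have hF : HasFDerivAt f (fderiv ℂ f ((v : V), (0 : V →L[ℂ] ℂ))) ((v : V), (0 : ℂ) • φ) :=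
      h0 ▸ (hdiff _).hasFDerivAt
    have h := hF.comp_hasDerivAt 0 hinner
    exact h
  have hd2 : HasDerivAt (fun c : ℂ => f (v, c • φ)) ((0 : V), (f (v, φ)).2) 0 := by
    have : HasDerivAt (fun c : ℂ => ((v : V), c • (f (v, φ)).2)) ((0 : V), (f (v, φ)).2) 0 := by
      refine (hasDerivAt_const (0 : ℂ) v).prodMk ?_
      have h := (hasDerivAt_id (0 : ℂ)).smul_const ((f (v, φ)).2)
      rw [one_smul ℂ ((f (v, φ)).2)] at h
      exact h
    exact this.congr_of_eventuallyEq (Filter.Eventually.of_forall fun c => heqall c v φ)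
  have huniq := hd1.unique hd2
  have h2 : (f (v, φ)).2 = φ := by
    have := congrArg Prod.snd huniq
    simp only at this
    rw [hDsnd v φ] at this
    exact this.symm
  have h1 := hfst (v, φ)
  exact Prod.ext h1 h2
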